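/- For every n ≥ 1, the diagonal functor δ : Δ → Δⁿ is aspherical; that is, for every object ([p_1], …, [p_n]) of Δⁿ, the comma category δ/([p_1], …, [p_n]) is aspherical. -/

import Mathlib

open CategoryTheory CategoryTheory.Limits Simplicial

universe w v u v₁ u₁ v₂ u₂

namespace Paper

/-- The map `X ⟶ Δ[1]` constant at vertex `ε`. -/
def vertexMap (X : SSet.{u}) (ε : Fin 2) : X ⟶ Δ[1] where
  app m := TypeCat.ofHom fun _ => SSet.stdSimplex.const 1 ε m
  naturality := by
    intro m m' f
    rfl

/-- Two maps of simplicial sets `f g : X ⟶ K` are directly homotopic if there is a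
homotopy `X ⨯ Δ[1] ⟶ K` from `f` to `g`. -/
def DHomotopic {X K : SSet.{u}} (f g : X ⟶ K) : Prop :=
  ∃ H : (X ⨯ Δ[1] : SSet.{u}) ⟶ K,
    prod.lift (𝟙 X) (vertexMap X 0) ≫ H = f ∧ prod.lift (𝟙 X) (vertexMap X 1) ≫ H = g

lemma DHomotopic.precomp {X Y K : SSet.{u}} (f : X ⟶ Y) {g g' : Y ⟶ K}
    (h : DHomotopic g g') : DHomotopic (f ≫ g) (f ≫ g') := by
  obtain ⟨H, h0, h1⟩ := h
  have key : ∀ ε : Fin 2, f ≫ vertexMap Y ε = vertexMap X ε := by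
    intro ε
    apply SSet.hom_ext
    intro n
    rfl
  have e : ∀ ε : Fin 2, prod.lift (𝟙 X) (vertexMap X ε) ≫ prod.map f (𝟙 Δ[1]) =
      f ≫ prod.lift (𝟙 Y) (vertexMap Y ε) := by
    intro ε
    apply Limits.prod.hom_ext
    · simp [key ε]
    · simp [key ε]
  refine ⟨prod.map f (𝟙 _) ≫ H, ?_, ?_⟩
  · rw [← Category.assoc, e 0, Category.assoc, h0]
  · rw [← Category.assoc, e 1, Category.assoc, h1]

/-- Homotopy classes of maps `X ⟶ K`: the quotient of `X ⟶ K` by the equivalence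
relation generated by direct homotopy. -/
def HClass (X K : SSet.{u}) : Type u :=
  Quot (@DHomotopic X K)

/-- Precomposition on homotopy classes. -/
def precompHC {X Y K : SSet.{u}} (f : X ⟶ Y) : HClass Y K → HClass X K :=
  Quot.map (fun g => f ≫ g) (fun _ _ h => h.precomp f)

/-- A map of simplicial sets is a weak homotopy equivalence (in the Kan-Quillen sense)
iff for every Kan complex `K`, precomposition induces a bijection on homotopy classes. -/
def IsWeakHomotopyEquiv {X Y : SSet.{u}} (f : X ⟶ Y) : Prop :=
  ∀ K : SSet.{u}, SSet.KanComplex K → Function.Bijective (precompHC (K := K) f)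

/-- The nerve of a category, `ULift`ed so that nerves of categories in different universes
can be compared. -/
def nerveUp (A : Type u₁) [Category.{v₁} A] : SSet.{max w u₁ v₁} :=
  nerve A ⋙ CategoryTheory.uliftFunctor.{w, max u₁ v₁}

/-- The map induced by a functor on (`ULift`ed) nerves. -/
def nerveUpMap {A : Type u₁} [Category.{v₁} A] {B : Type u₂} [Category.{v₂} B]
    (F : A ⥤ B) : nerveUp.{max u₂ v₂} A ⟶ nerveUp.{max u₁ v₁} B where
  app _ := TypeCat.ofHom fun x => ⟨x.down ⋙ F⟩
  naturality := fun _ _ _ => rfl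

/-- A functor is a Thomason equivalence if its nerve is a weak homotopy equivalence of
simplicial sets. -/
def IsThomasonEquiv {A : Type u₁} [Category.{v₁} A] {B : Type u₂} [Category.{v₂} B]
    (F : A ⥤ B) : Prop :=
  IsWeakHomotopyEquiv (nerveUpMap F)

/-- A category is aspherical if its nerve is weakly contractible, i.e. the unique map
from its nerve to the terminal simplicial set is a weak homotopy equivalence. -/
def Aspherical (A : Type u₁) [Category.{v₁} A] : Prop :=
  IsWeakHomotopyEquiv (terminal.from (nerve A))

/-- A functor `u : A ⥤ B` is aspherical if all the comma categories `u/b` are aspherical. -/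
def AsphericalFunctor {A : Type u₁} [Category.{v₁} A] {B : Type u₂} [Category.{v₂} B]
    (u : A ⥤ B) : Prop :=
  ∀ b : B, Aspherical (CostructuredArrow u b)



section Machinery

variable {A B : Type u} [Category.{u} A] [Category.{u} B]

/-- The cylinder functor `A × Fin 2 ⥤ B` attached to a natural transformation `α : F ⟶ G`. -/
def cylFunctor {F G : A ⥤ B} (α : F ⟶ G) : A × Fin 2 ⥤ B where
  obj p := match p with
    | ⟨a, ⟨0,_⟩⟩ => F.obj a
    | ⟨a, ⟨1,_⟩⟩ => G.obj a
  map {p q} f :=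
    match p, q, f with
    | ⟨_, ⟨0,_⟩⟩, ⟨_, ⟨0,_⟩⟩, f => F.map f.1
    | ⟨_, ⟨0,_⟩⟩, ⟨a', ⟨1,_⟩⟩, f => F.map f.1 ≫ α.app a'
    | ⟨_, ⟨1,_⟩⟩, ⟨_, ⟨1,_⟩⟩, f => G.map f.1
    | ⟨_, ⟨1,_⟩⟩, ⟨_, ⟨0,_⟩⟩, f => (Nat.not_succ_le_zero _ f.2.down.down).elim
  map_id p := by
    obtain ⟨a, ⟨(_|_|i), hi⟩⟩ := p
    · simp
    · simp
    · omega
  map_comp {p q r} f g := by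
    obtain ⟨a, ⟨(_|_|i), hi⟩⟩ := p <;> obtain ⟨b, ⟨(_|_|j), hj⟩⟩ := q <;>
      obtain ⟨c, ⟨(_|_|k), hk⟩⟩ := r <;>
      first
      | omega
      | (exact (Nat.not_succ_le_zero _ f.2.down.down).elim)
      | (exact (Nat.not_succ_le_zero _ g.2.down.down).elim)
      | simp

/-- The plain (same universe) nerve map of a functor. -/
def nmap (F : A ⥤ B) : (nerve A : SSet.{u}) ⟶ nerve B where
  app m := TypeCat.ofHom fun x => x ⋙ F
  naturality _ _ _ := rfl

lemma nmap_id : nmap (𝟭 A) = 𝟙 (nerve A : SSet.{u}) := rfl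

/-- A concrete model for the binary product `X ⨯ Δ[1]`. -/
def cyl (X : SSet.{u}) : SSet.{u} where
  obj m := X.obj m × (Δ[1] : SSet.{u}).obj m
  map f := TypeCat.ofHom fun p => (X.map f p.1, (Δ[1] : SSet.{u}).map f p.2)
  map_id m := by ext p <;> simp
  map_comp f g := by ext p <;> simp

def cylFst (X : SSet.{u}) : cyl X ⟶ X where
  app m := TypeCat.ofHom fun p => p.1
  naturality _ _ _ := rfl

def cylSnd (X : SSet.{u}) : cyl X ⟶ Δ[1] where
  app m := TypeCat.ofHom fun p => p.2
  naturality _ _ _ := rfl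

def cylIsLimit (X : SSet.{u}) : IsLimit (BinaryFan.mk (cylFst X) (cylSnd X)) :=
  BinaryFan.isLimitMk
    (fun s => { app := fun m => TypeCat.ofHom fun x => (s.fst.app m x, s.snd.app m x),
                naturality := by
                  intro m m' f
                  apply ConcreteCategory.hom_ext
                  intro x
                  have h1 := types_congr_hom (s.fst.naturality f) x
                  have h2 := types_congr_hom (s.snd.naturality f) x
                  simp only [types_comp_apply] at h1 h2
                  exact Prod.ext h1 h2 })
    (fun s => rfl) (fun s => rfl)
    (fun s m h1 h2 => by
      ext k x
      have a1 := types_congr_hom (congrArg (fun t => NatTrans.app t k) h1) x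
      have a2 := types_congr_hom (congrArg (fun t => NatTrans.app t k) h2) x
      exact Prod.ext a1 a2)

noncomputable def cylIso (X : SSet.{u}) : cyl X ≅ (X ⨯ Δ[1] : SSet.{u}) :=
  (cylIsLimit X).conePointUniqueUpToIso (limit.isLimit (pair X Δ[1]))

lemma cylIso_hom_fst (X : SSet.{u}) : (cylIso X).hom ≫ Limits.prod.fst = cylFst X :=
  (cylIsLimit X).conePointUniqueUpToIso_hom_comp (limit.isLimit (pair X Δ[1])) ⟨WalkingPair.left⟩

lemma cylIso_hom_snd (X : SSet.{u}) : (cylIso X).hom ≫ Limits.prod.snd = cylSnd X :=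
  (cylIsLimit X).conePointUniqueUpToIso_hom_comp (limit.isLimit (pair X Δ[1])) ⟨WalkingPair.right⟩

/-- The concrete homotopy attached to a natural transformation. -/
def cylMap {F G : A ⥤ B} (α : F ⟶ G) : cyl (nerve A : SSet.{u}) ⟶ (nerve B : SSet.{u}) where
  app m := TypeCat.ofHom fun p => Functor.prod' p.1 (p.2.down.toOrderHom.monotone.functor) ⋙ cylFunctor α
  naturality _ _ _ := rfl

def cylVertex (X : SSet.{u}) (ε : Fin 2) : X ⟶ cyl X where
  app m := TypeCat.ofHom fun x => (x, SSet.stdSimplex.const 1 ε m)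
  naturality := by
    intro m m' f
    rfl

lemma lift_cylIso (X : SSet.{u}) (ε : Fin 2) :
    prod.lift (𝟙 X) (vertexMap X ε) = cylVertex X ε ≫ (cylIso X).hom := by
  apply Limits.prod.hom_ext
  · rw [prod.lift_fst, Category.assoc, cylIso_hom_fst]
    rfl
  · rw [prod.lift_snd, Category.assoc, cylIso_hom_snd]
    rfl

/-- A natural transformation induces a direct homotopy between the nerve maps. -/
lemma dHomotopic_nmap {F G : A ⥤ B} (α : F ⟶ G) : DHomotopic (nmap F) (nmap G) := by
  refine ⟨(cylIso (nerve A)).inv ≫ cylMap α, ?_, ?_⟩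
  · rw [lift_cylIso, Category.assoc, ← Category.assoc (cylIso _).hom, Iso.hom_inv_id,
      Category.id_comp]
    rfl
  · rw [lift_cylIso, Category.assoc, ← Category.assoc (cylIso _).hom, Iso.hom_inv_id,
      Category.id_comp]
    rfl

lemma precompHC_comp {X Y Z K : SSet.{u}} (f : X ⟶ Y) (g : Y ⟶ Z) (a : HClass Z K) :
    precompHC f (precompHC g a) = precompHC (f ≫ g) a := by
  induction a using Quot.ind with
  | _ h => exact congrArg (Quot.mk _) (Category.assoc f g h).symm

lemma precompHC_id {X K : SSet.{u}} (a : HClass X K) : precompHC (𝟙 X) a = a := by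
  induction a using Quot.ind with
  | _ h => exact congrArg (Quot.mk _) (Category.id_comp h)

lemma precompHC_congr {X Y K : SSet.{u}} {f g : X ⟶ Y} (h : DHomotopic f g)
    (a : HClass Y K) : precompHC f a = precompHC g a := by
  induction a using Quot.ind with
  | _ k =>
    obtain ⟨H, h0, h1⟩ := h
    refine Quot.sound ⟨H ≫ k, ?_, ?_⟩
    · rw [← Category.assoc, h0]
    · rw [← Category.assoc, h1]

/-- The point of the nerve attached to an object. -/
def tPoint (x₀ : A) : (⊤_ SSet.{u}) ⟶ (nerve A : SSet.{u}) where
  app m := TypeCat.ofHom fun _ => (Functor.const _).obj x₀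
  naturality _ _ _ := rfl

/-- A category equipped with a contraction to a point is aspherical. -/
theorem aspherical_of_contraction (x₀ : A) (C : A ⥤ A)
    (α : 𝟭 A ⟶ C) (β : (Functor.const A).obj x₀ ⟶ C) : Aspherical A := by
  intro K _
  have h1 : ∀ a : HClass (⊤_ SSet.{u}) K,
      precompHC (tPoint x₀) (precompHC (terminal.from (nerve A)) a) = a := by
    intro a
    rw [precompHC_comp,
      show tPoint x₀ ≫ terminal.from (nerve A) = 𝟙 (⊤_ SSet.{u}) from
        terminalIsTerminal.hom_ext _ _,
      precompHC_id]
  have h2 : ∀ b : HClass (nerve A : SSet.{u}) K,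
      precompHC (terminal.from (nerve A)) (precompHC (tPoint x₀) b) = b := by
    intro b
    rw [precompHC_comp,
      show terminal.from (nerve A : SSet.{u}) ≫ tPoint x₀ = nmap ((Functor.const A).obj x₀)
        from rfl,
      precompHC_congr (dHomotopic_nmap β) b, ← precompHC_congr (dHomotopic_nmap α) b,
      nmap_id, precompHC_id]
  constructor
  · intro a b hab
    rw [← h1 a, ← h1 b, hab]
  · intro b
    exact ⟨precompHC (tPoint x₀) b, h2 b⟩

end Machinery


/-- The diagonal functor `Δ ⥤ Δⁿ`. -/
def diagFunctor (n : ℕ) : SimplexCategory ⥤ (Fin n → SimplexCategory) :=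
  Functor.pi' fun _ => 𝟭 _

section Diag

variable {n : ℕ} {P : Fin n → SimplexCategory}

/-- Extend a map `m ⟶ p` to `[m.len+1] ⟶ p`, sending the new top vertex to the top. -/
def extHom {m p : SimplexCategory} (f : m ⟶ p) : SimplexCategory.mk (m.len + 1) ⟶ p :=
  SimplexCategory.Hom.mk
    ⟨fun j => if h : (j : ℕ) < m.len + 1 then f.toOrderHom ⟨j, h⟩ else Fin.last p.len,
     by
      intro j k hjk
      dsimp only
      by_cases h1 : (j : ℕ) < m.len + 1
      · by_cases h2 : (k : ℕ) < m.len + 1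
        · rw [dif_pos h1, dif_pos h2]
          exact f.toOrderHom.monotone hjk
        · rw [dif_pos h1, dif_neg h2]
          exact Fin.le_last _
      · have h2 : ¬ (k : ℕ) < m.len + 1 := by
          have : (j : ℕ) ≤ (k : ℕ) := hjk
          omega
        rw [dif_neg h1, dif_neg h2]⟩

/-- Shift a map `m ⟶ m'` to `[m.len+1] ⟶ [m'.len+1]`, top to top. -/
def shiftHom {m m' : SimplexCategory} (g : m ⟶ m') :
    SimplexCategory.mk (m.len + 1) ⟶ SimplexCategory.mk (m'.len + 1) :=
  SimplexCategory.Hom.mk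
    ⟨fun j => if h : (j : ℕ) < m.len + 1 then (g.toOrderHom ⟨j, h⟩).castSucc
      else Fin.last (m'.len + 1),
     by
      intro j k hjk
      dsimp only
      by_cases h1 : (j : ℕ) < m.len + 1
      · by_cases h2 : (k : ℕ) < m.len + 1
        · rw [dif_pos h1, dif_pos h2]
          exact Fin.castSucc_le_castSucc_iff.mpr (g.toOrderHom.monotone hjk)
        · rw [dif_pos h1, dif_neg h2]
          exact Fin.le_last _
      · have h2 : ¬ (k : ℕ) < m.len + 1 := by
          have : (j : ℕ) ≤ (k : ℕ) := hjk
          omega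
        rw [dif_neg h1, dif_neg h2]⟩

lemma shift_ext {m m' p : SimplexCategory} (g : m ⟶ m') (f : m' ⟶ p) :
    shiftHom g ≫ extHom f = extHom (g ≫ f) := by
  apply SimplexCategory.Hom.ext
  ext j : 3
  simp only [extHom, shiftHom, SimplexCategory.comp_toOrderHom, OrderHom.comp_coe,
    Function.comp_apply, SimplexCategory.Hom.toOrderHom_mk, OrderHom.coe_mk]
  by_cases h : (j : ℕ) < m.len + 1
  · rw [dif_pos h, dif_pos h,
      dif_pos (show ((((g.toOrderHom) ⟨j, h⟩).castSucc : Fin (m'.len+2)) : ℕ) < m'.len + 1 by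
        simpa using (g.toOrderHom ⟨j, h⟩).isLt)]
    rfl
  · rw [dif_neg h, dif_neg h, dif_neg (by simp)]

lemma shiftHom_id {m : SimplexCategory} : shiftHom (𝟙 m) = 𝟙 _ := by
  apply SimplexCategory.Hom.ext
  ext j : 3
  simp only [shiftHom, SimplexCategory.Hom.toOrderHom_mk, OrderHom.coe_mk]
  by_cases h : (j : ℕ) < m.len + 1
  · rw [dif_pos h]
    rfl
  · rw [dif_neg h]
    have hj : (j : ℕ) < m.len + 2 := j.isLt
    have e : ((SimplexCategory.Hom.toOrderHom (𝟙 (SimplexCategory.mk (m.len+1)))) j) = j := rfl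
    rw [e, Fin.val_last]
    omega

lemma shiftHom_comp {m m' m'' : SimplexCategory} (g : m ⟶ m') (h : m' ⟶ m'') :
    shiftHom (g ≫ h) = shiftHom g ≫ shiftHom h := by
  apply SimplexCategory.Hom.ext
  ext j : 3
  simp only [shiftHom, SimplexCategory.comp_toOrderHom, OrderHom.comp_coe,
    Function.comp_apply, SimplexCategory.Hom.toOrderHom_mk, OrderHom.coe_mk]
  by_cases hj : (j : ℕ) < m.len + 1
  · rw [dif_pos hj, dif_pos hj,
      dif_pos (show ((((g.toOrderHom) ⟨j, hj⟩).castSucc : Fin (m'.len+2)) : ℕ) < m'.len + 1 by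
        simpa using (g.toOrderHom ⟨j, hj⟩).isLt)]
    rfl
  · rw [dif_neg hj, dif_neg hj, dif_neg (by simp)]

/-- The inclusion `m ⟶ [m.len + 1]`. -/
def incHom (m : SimplexCategory) : m ⟶ SimplexCategory.mk (m.len + 1) :=
  SimplexCategory.Hom.mk ⟨Fin.castSucc, fun _ _ h => Fin.castSucc_le_castSucc_iff.mpr h⟩

lemma incHom_ext {m p : SimplexCategory} (f : m ⟶ p) : incHom m ≫ extHom f = f := by
  apply SimplexCategory.Hom.ext
  ext j : 3
  simp only [incHom, extHom, SimplexCategory.comp_toOrderHom, OrderHom.comp_coe,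
    Function.comp_apply, SimplexCategory.Hom.toOrderHom_mk, OrderHom.coe_mk]
  rw [dif_pos (by exact j.isLt)]
  rfl

lemma incHom_natural {m m' : SimplexCategory} (g : m ⟶ m') :
    g ≫ incHom m' = incHom m ≫ shiftHom g := by
  apply SimplexCategory.Hom.ext
  ext j : 3
  simp only [incHom, shiftHom, SimplexCategory.comp_toOrderHom, OrderHom.comp_coe,
    Function.comp_apply, SimplexCategory.Hom.toOrderHom_mk, OrderHom.coe_mk]
  rw [dif_pos (by exact j.isLt)]
  rfl

/-- The map `[0] ⟶ [m.len + 1]` hitting the top vertex. -/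
def topHom (m : SimplexCategory) : SimplexCategory.mk 0 ⟶ SimplexCategory.mk (m.len + 1) :=
  SimplexCategory.const _ _ (Fin.last (m.len + 1))

lemma topHom_ext {m p : SimplexCategory} (f : m ⟶ p) :
    topHom m ≫ extHom f = SimplexCategory.const _ p (Fin.last p.len) := by
  apply SimplexCategory.Hom.ext
  ext j : 3
  simp only [topHom, extHom, SimplexCategory.comp_toOrderHom, OrderHom.comp_coe,
    Function.comp_apply, SimplexCategory.Hom.toOrderHom_mk, OrderHom.coe_mk,
    SimplexCategory.const]
  rw [dif_neg (by simp)]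

lemma topHom_natural {m m' : SimplexCategory} (g : m ⟶ m') :
    topHom m ≫ shiftHom g = topHom m' := by
  apply SimplexCategory.Hom.ext
  ext j : 3
  simp only [topHom, shiftHom, SimplexCategory.comp_toOrderHom, OrderHom.comp_coe,
    Function.comp_apply, SimplexCategory.Hom.toOrderHom_mk, OrderHom.coe_mk,
    SimplexCategory.const]
  rw [dif_neg (by simp)]

/-- The contraction functor on the comma category `δ/P`. -/
def Cfun : CostructuredArrow (diagFunctor n) P ⥤ CostructuredArrow (diagFunctor n) P where
  obj X := CostructuredArrow.mk (Y := SimplexCategory.mk (X.left.len + 1))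
    (f := fun i => extHom (X.hom i))
  map {X Y} g := CostructuredArrow.homMk (shiftHom g.left) (by
    funext i
    have w : g.left ≫ Y.hom i = X.hom i := congrFun (CostructuredArrow.w g) i
    change shiftHom g.left ≫ extHom (Y.hom i) = extHom (X.hom i)
    exact (shift_ext g.left (Y.hom i)).trans (congrArg extHom w))
  map_id X := by
    apply CostructuredArrow.hom_ext
    simp only [CostructuredArrow.homMk_left, CostructuredArrow.id_left]
    exact shiftHom_id
  map_comp {X Y Z} f g := by
    apply CostructuredArrow.hom_ext
    simp only [CostructuredArrow.homMk_left, CostructuredArrow.comp_left]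
    exact shiftHom_comp _ _

/-- The distinguished point of the comma category. -/
def x0 (P : Fin n → SimplexCategory) : CostructuredArrow (diagFunctor n) P :=
  CostructuredArrow.mk (Y := SimplexCategory.mk 0)
    (f := fun i => SimplexCategory.const _ (P i) (Fin.last (P i).len))

/-- The natural transformation `𝟭 ⟶ Cfun`. -/
def incTrans : 𝟭 (CostructuredArrow (diagFunctor n) P) ⟶ Cfun := by
  refine ⟨fun X => CostructuredArrow.homMk (incHom X.left) ?_, ?_⟩
  · funext i
    change incHom X.left ≫ extHom (X.hom i) = X.hom i
    exact incHom_ext (X.hom i)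
  · intro X Y g
    apply CostructuredArrow.hom_ext
    simp only [Functor.id_map, CostructuredArrow.comp_left, CostructuredArrow.homMk_left]
    exact incHom_natural g.left

/-- The natural transformation `const x₀ ⟶ Cfun`. -/
def topTrans : (Functor.const (CostructuredArrow (diagFunctor n) P)).obj (x0 P) ⟶ Cfun := by
  refine ⟨fun X => CostructuredArrow.homMk (topHom X.left) ?_, ?_⟩
  · funext i
    change topHom X.left ≫ extHom (X.hom i) = _
    refine (topHom_ext (X.hom i)).trans ?_
    rfl
  · intro X Y g
    apply CostructuredArrow.hom_ext
    simp only [Functor.const_obj_map, CostructuredArrow.comp_left,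
      CostructuredArrow.homMk_left, CostructuredArrow.id_left, Category.id_comp]
    exact (topHom_natural g.left).symm

end Diag


/-- For every `n ≥ 1`, the diagonal functor `δ : Δ ⥤ Δⁿ` is aspherical; that is, for every
object `([p_1], …, [p_n])` of `Δⁿ`, the comma category `δ/([p_1], …, [p_n])` is aspherical. -/
theorem diagFunctor_aspherical (n : ℕ) (hn : 1 ≤ n) :
    ∀ P : Fin n → SimplexCategory, Aspherical (CostructuredArrow (diagFunctor n) P) := by
  intro P
  exact aspherical_of_contraction (x0 P) Cfun incTrans topTrans

end Paper
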